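/- Let U = Σ_j U_j ⊗ |a_j⟩⟨a_j| be a block-diagonal unitary on H_S ⊗ H_E with each U_j unitary, let ρ_S = Σ_k q_k |ψ_k⟩⟨ψ_k| with {|ψ_k⟩} an orthonormal basis of H_S, q_k ≥ 0, Σ_k q_k = 1, and define environment Kraus operators L_j = Σ_k √q_k ⟨ψ_j|U|ψ_k⟩ (sandwiching over the system). Then Σ_j L_j L_j† = I on H_E, i.e., the induced channel on the environment is unital. -/

import Mathlib

open Matrix Kronecker

/-- The partial matrix element `⟨ψ_j|U|ψ_k⟩` (sandwich over the system factor),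
with the system orthonormal basis taken to be the standard basis. -/
def sandS {m n : ℕ} (U : Matrix (Fin m × Fin n) (Fin m × Fin n) ℂ)
    (j k : Fin m) : Matrix (Fin n) (Fin n) ℂ :=
  fun e e' => U (j, e) (k, e')

/-- For a block-diagonal unitary `U = Σ_j U_j ⊗ |a_j⟩⟨a_j|`, the induced channel on the
environment, with Kraus operators `L_j = Σ_k √q_k ⟨ψ_j|U|ψ_k⟩`, is unital. -/
theorem stmt3 {m n : ℕ}
    (Uj : Fin n → Matrix (Fin m) (Fin m) ℂ)
    (hUj : ∀ j, Uj j ∈ Matrix.unitaryGroup (Fin m) ℂ)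
    (U : Matrix (Fin m × Fin n) (Fin m × Fin n) ℂ)
    (hblock : U = ∑ j, Uj j ⊗ₖ Matrix.single j j (1 : ℂ))
    (q : Fin m → ℝ) (hq : ∀ k, 0 ≤ q k) (hqsum : ∑ k, q k = 1)
    (L : Fin m → Matrix (Fin n) (Fin n) ℂ)
    (hL : ∀ j, L j = ∑ k, (Real.sqrt (q k) : ℂ) • sandS U j k) :
    ∑ j, L j * (L j)ᴴ = 1 := by
  have hs : ∀ (j k : Fin m) (e e' : Fin n),
      sandS U j k e e' = if e = e' then Uj e j k else 0 := by
    intro j k e e'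
    simp only [sandS, hblock, Matrix.sum_apply, Matrix.kroneckerMap_apply,
      Matrix.single]
    rw [Finset.sum_eq_single e]
    · by_cases h : e = e' <;> simp [h]
    · intro b _ hb
      simp [hb]
    · simp
  have hLd : ∀ (j : Fin m) (e e' : Fin n),
      L j e e' = if e = e' then ∑ k, (Real.sqrt (q k) : ℂ) * Uj e j k else 0 := by
    intro j e e'
    rw [hL]
    simp only [Matrix.sum_apply, Matrix.smul_apply, hs, smul_eq_mul]
    by_cases h : e = e' <;> simp [h]
  -- key unitarity computation
  have key : ∀ (e : Fin n),
      (∑ j, (∑ k, (Real.sqrt (q k) : ℂ) * Uj e j k) *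
        (starRingEnd ℂ) (∑ k, (Real.sqrt (q k) : ℂ) * Uj e j k)) = 1 := by
    intro e
    have hu : (Uj e)ᴴ * (Uj e) = 1 := by
      have := (hUj e).1
      simpa [Matrix.star_eq_conjTranspose] using this
    have hcol : ∀ k k' : Fin m,
        (∑ j, Uj e j k * (starRingEnd ℂ) (Uj e j k')) = if k' = k then 1 else 0 := by
      intro k k'
      have := congrArg (fun M => M k' k) hu
      simp only [Matrix.mul_apply, Matrix.conjTranspose_apply, Matrix.one_apply] at this
      rw [← this]
      apply Finset.sum_congr rfl
      intro j _
      rw [Complex.star_def]; ring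
    calc (∑ j, (∑ k, (Real.sqrt (q k) : ℂ) * Uj e j k) *
        (starRingEnd ℂ) (∑ k, (Real.sqrt (q k) : ℂ) * Uj e j k))
        = ∑ j, ∑ k, ∑ k', ((Real.sqrt (q k) : ℂ) * Uj e j k) *
            ((Real.sqrt (q k') : ℂ) * (starRingEnd ℂ) (Uj e j k')) := by
          apply Finset.sum_congr rfl
          intro j _
          rw [map_sum, Finset.sum_mul_sum]
          apply Finset.sum_congr rfl; intro k _
          apply Finset.sum_congr rfl; intro k' _
          simp only [_root_.map_mul, Complex.conj_ofReal]
      _ = ∑ k, ∑ k', (Real.sqrt (q k) : ℂ) * (Real.sqrt (q k') : ℂ) *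
            (∑ j, Uj e j k * (starRingEnd ℂ) (Uj e j k')) := by
          rw [Finset.sum_comm]
          apply Finset.sum_congr rfl; intro k _
          rw [Finset.sum_comm]
          apply Finset.sum_congr rfl; intro k' _
          rw [Finset.mul_sum]
          apply Finset.sum_congr rfl; intro j _
          ring
      _ = ∑ k, (Real.sqrt (q k) : ℂ) * (Real.sqrt (q k) : ℂ) := by
          apply Finset.sum_congr rfl; intro k _
          rw [Finset.sum_eq_single k]
          · rw [hcol k k]; simp
          · intro k' _ hk'
            rw [hcol k k']
            simp [hk']
          · simp
      _ = 1 := by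
          have : ∀ k, (Real.sqrt (q k) : ℂ) * (Real.sqrt (q k) : ℂ) = (q k : ℂ) := by
            intro k
            rw [← Complex.ofReal_mul, Real.mul_self_sqrt (hq k)]
          simp only [this]
          rw [← Complex.ofReal_sum, hqsum, Complex.ofReal_one]
  ext e e'
  simp only [Matrix.sum_apply, Matrix.mul_apply, Matrix.conjTranspose_apply, hLd]
  by_cases h : e = e'
  · subst h
    simp only [Matrix.one_apply_eq]
    rw [← key e]
    apply Finset.sum_congr rfl
    intro j _
    rw [Finset.sum_eq_single e]
    · simp
    · intro f _ hf
      simp [Ne.symm hf]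
    · simp
  · simp only [Matrix.one_apply_ne h]
    apply Finset.sum_eq_zero
    intro j _
    apply Finset.sum_eq_zero
    intro f _
    by_cases hf : e = f
    · subst hf
      simp [Ne.symm h]
    · simp [hf]
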